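/- Every developable T₁ topological space is e-separable. -/

import Mathlib

open Cardinal Set

universe u

/-- A subset `D` of a topological space is closed discrete iff it is closed and
its subspace topology is discrete. -/
def ClosedDiscrete {X : Type u} [TopologicalSpace X] (D : Set X) : Prop :=
  IsClosed D ∧ DiscreteTopology D

/-- A space is `e`-separable iff it has a dense set which is a countable union of
closed discrete sets. -/
def ESeparable (X : Type u) [TopologicalSpace X] : Prop :=
  ∃ D : ℕ → Set X, (∀ n, ClosedDiscrete (D n)) ∧ Dense (⋃ n, D n)

/-- The density of a space: the least cardinality of a dense subset. -/
noncomputable def density (X : Type u) [TopologicalSpace X] : Cardinal.{u} :=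
  sInf {c | ∃ D : Set X, Dense D ∧ #D = c}

/-- The extent of a space: the supremum of the cardinalities of closed discrete subsets. -/
noncomputable def extent (X : Type u) [TopologicalSpace X] : Cardinal.{u} :=
  sSup {c | ∃ D : Set X, ClosedDiscrete D ∧ #D = c}

/-- Every developable `T₁` space is `e`-separable.  A development is a sequence
`(𝒢 n)` of open covers such that the stars `st(x, 𝒢 n) = ⋃₀ {U ∈ 𝒢 n | x ∈ U}`
form a neighbourhood base at every point. -/
theorem eSeparable_of_developable {X : Type u} [TopologicalSpace X] [T1Space X]
    (𝒢 : ℕ → Set (Set X))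
    (hopen : ∀ n, ∀ U ∈ 𝒢 n, IsOpen U)
    (hcover : ∀ n, ⋃₀ 𝒢 n = Set.univ)
    (hdev : ∀ (x : X) (V : Set X), IsOpen V → x ∈ V →
      ∃ n, ⋃₀ {U ∈ 𝒢 n | x ∈ U} ⊆ V) :
    ESeparable X := by
  classical
  have key : ∀ n, ∃ D : Set X, (∀ U ∈ 𝒢 n, (D ∩ U).Subsingleton) ∧
      ∀ x ∉ D, ∃ U ∈ 𝒢 n, x ∈ U ∧ (D ∩ U).Nonempty := by
    intro n
    obtain ⟨D, hD⟩ := zorn_subset {S : Set X | ∀ U ∈ 𝒢 n, (S ∩ U).Subsingleton}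
      (fun c hcS hc => ⟨⋃₀ c, fun U hU a ha b hb => by
        obtain ⟨Sa, hSa, haS⟩ := ha.1
        obtain ⟨Sb, hSb, hbS⟩ := hb.1
        rcases hc.total hSa hSb with h | h
        · exact hcS hSb U hU ⟨h haS, ha.2⟩ ⟨hbS, hb.2⟩
        · exact hcS hSa U hU ⟨haS, ha.2⟩ ⟨h hbS, hb.2⟩,
        fun s hs => subset_sUnion_of_mem hs⟩)
    refine ⟨D, hD.prop, fun x hx => ?_⟩
    by_contra h
    push_neg at h
    have hsep : insert x D ∈ {S : Set X | ∀ U ∈ 𝒢 n, (S ∩ U).Subsingleton} := by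
      intro U hU a ha b hb
      rcases ha.1 with rfl | haD
      · rcases hb.1 with rfl | hbD
        · rfl
        · exact absurd (show b ∈ D ∩ U from ⟨hbD, hb.2⟩) (by rw [h U hU ha.2]; exact notMem_empty b)
      · rcases hb.1 with rfl | hbD
        · exact absurd (show a ∈ D ∩ U from ⟨haD, ha.2⟩) (by rw [h U hU hb.2]; exact notMem_empty a)
        · exact hD.prop U hU ⟨haD, ha.2⟩ ⟨hbD, hb.2⟩
    have := hD.eq_of_subset hsep (subset_insert x D)
    exact hx (this ▸ mem_insert x D)
  choose D hsep hmax using key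
  have hmem : ∀ (n) (x : X), ∃ U ∈ 𝒢 n, x ∈ U := fun n x => by
    have : x ∈ ⋃₀ 𝒢 n := (hcover n) ▸ mem_univ x
    exact this
  refine ⟨D, fun n => ⟨?_, ?_⟩, ?_⟩
  · -- closed
    rw [← isOpen_compl_iff, isOpen_iff_mem_nhds]
    intro x hx
    obtain ⟨U, hU, hxU⟩ := hmem n x
    rcases eq_empty_or_nonempty (D n ∩ U) with he | ⟨d, hd⟩
    · exact Filter.mem_of_superset ((hopen n U hU).mem_nhds hxU)
        (fun y hy hyD => (eq_empty_iff_forall_notMem.mp he y ⟨hyD, hy⟩))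
    · have hdx : d ≠ x := fun h => hx (h ▸ hd.1)
      refine Filter.mem_of_superset (((hopen n U hU).sdiff isClosed_singleton).mem_nhds
        ⟨hxU, fun h => hdx ((mem_singleton_iff.mp h).symm)⟩) ?_
      intro y hy hyD
      exact hy.2 (hsep n U hU ⟨hyD, hy.1⟩ hd ▸ rfl)
  · -- discrete
    rw [discreteTopology_iff_isOpen_singleton]
    rintro ⟨d, hd⟩
    obtain ⟨U, hU, hdU⟩ := hmem n d
    have : ({⟨d, hd⟩} : Set (D n)) = Subtype.val ⁻¹' U := by
      ext ⟨y, hy⟩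
      simp only [mem_singleton_iff, Subtype.mk_eq_mk, mem_preimage]
      constructor
      · rintro rfl; exact hdU
      · intro hyU; exact hsep n U hU ⟨hy, hyU⟩ ⟨hd, hdU⟩
    rw [this]
    exact (hopen n U hU).preimage continuous_subtype_val
  · -- dense
    rw [dense_iff_inter_open]
    intro V hV ⟨x, hxV⟩
    obtain ⟨n, hn⟩ := hdev x V hV hxV
    by_cases hx : x ∈ D n
    · exact ⟨x, hxV, mem_iUnion.mpr ⟨n, hx⟩⟩
    · obtain ⟨U, hU, hxU, hne⟩ := hmax n x hx
      obtain ⟨d, hdD, hdU⟩ := hne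
      exact ⟨d, hn ⟨U, ⟨hU, hxU⟩, hdU⟩, mem_iUnion.mpr ⟨n, hdD⟩⟩
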